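/- Let u*, u', d' be positive reals with u* > u'. Then there exists δ > 0 (namely δ = d'·u'/u*) such that for all d* with 0 < d* < δ, the multiplicative selector strictly prefers the distractor (d*·u* < d'·u'), while the additive selector with any weight w ∈ (0, (u*-u')/((u*-u')+(d'-d*))) strictly prefers the target, assuming d' > d*. -/
import Mathlib

theorem stmt_2 (us u' d' : ℝ) (hus : 0 < us) (hu' : 0 < u') (hd' : 0 < d')
    (hu : u' < us) :
    ∃ δ : ℝ, 0 < δ ∧ δ = d' * u' / us ∧
      ∀ ds : ℝ, 0 < ds → ds < δ → ds < d' →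
        ds * us < d' * u' ∧
        ∀ w : ℝ, 0 < w → w < (us - u') / ((us - u') + (d' - ds)) →
          w * ds + (1 - w) * us > w * d' + (1 - w) * u' := by
  refine ⟨d' * u' / us, by positivity, rfl, fun ds hds hlt hlt' => ⟨?_, ?_⟩⟩
  · calc ds * us < (d' * u' / us) * us := by nlinarith
      _ = d' * u' := by field_simp
  · intro w hw hw2
    have hA : 0 < us - u' := by linarith
    have hB : 0 < d' - ds := by linarith
    have h : w * ((us - u') + (d' - ds)) < us - u' := by
      rw [lt_div_iff₀ (by linarith)] at hw2
      linarith
    nlinarith
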